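/- Let U_1,…,U_d be pairwise commuting unitary n×n complex matrices and let P be an orthogonal projection on ℂ^n with ‖[P, U_i]‖ ≤ ε for all i. Then there exist pairwise commuting unitary matrices V_1,…,V_d on ℂ^n ⊕ ℂ^n such that each V_i commutes with the projection P ⊕ (I − P) and ‖V_i − (U_i ⊕ U_i)‖ ≤ 4ε for all i. -/

import Mathlib

open scoped Matrix

/-- The `ℓ²` operator norm of a complex matrix. -/
noncomputable def opNorm {ι : Type*} [Fintype ι] [DecidableEq ι]
    (A : Matrix ι ι ℂ) : ℝ :=
  ‖Matrix.toEuclideanCLM (𝕜 := ℂ) A‖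

lemma opNorm_nonneg {ι : Type*} [Fintype ι] [DecidableEq ι] (A : Matrix ι ι ℂ) :
    0 ≤ opNorm A := norm_nonneg _

lemma opNorm_mul_le {ι : Type*} [Fintype ι] [DecidableEq ι] (A B : Matrix ι ι ℂ) :
    opNorm (A * B) ≤ opNorm A * opNorm B := by
  unfold opNorm; rw [map_mul]; exact norm_mul_le _ _

lemma opNorm_unitary_le {ι : Type*} [Fintype ι] [DecidableEq ι] {A : Matrix ι ι ℂ}
    (hA : A ∈ Matrix.unitaryGroup ι ℂ) : opNorm A ≤ 1 := by
  have h1 : star A * A = 1 := (Matrix.mem_unitaryGroup_iff' (A := A)).mp hA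
  have h2 : ‖Matrix.toEuclideanCLM (𝕜 := ℂ) A‖ * ‖Matrix.toEuclideanCLM (𝕜 := ℂ) A‖ ≤ 1 := by
    rw [← CStarRing.norm_star_mul_self, ← map_star, ← map_mul, h1, map_one]
    exact ContinuousLinearMap.norm_id_le
  unfold opNorm; nlinarith [norm_nonneg (Matrix.toEuclideanCLM (𝕜 := ℂ) A)]

lemma opNorm_sub_le {ι : Type*} [Fintype ι] [DecidableEq ι] (A B : Matrix ι ι ℂ) :
    opNorm (A - B) ≤ opNorm A + opNorm B := by
  unfold opNorm; rw [map_sub]; exact norm_sub_le _ _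

lemma opNorm_neg {ι : Type*} [Fintype ι] [DecidableEq ι] (A : Matrix ι ι ℂ) :
    opNorm (-A) = opNorm A := by
  unfold opNorm; rw [map_neg, norm_neg]

lemma fromBlocks_sub' {k : Type*} (a b c e f g h l : Matrix k k ℂ) :
    Matrix.fromBlocks a b c e - Matrix.fromBlocks f g h l
      = Matrix.fromBlocks (a - f) (b - g) (c - h) (e - l) := by
  ext (i | i) (j | j) <;> simp [Matrix.fromBlocks]

lemma opNorm_fromBlocks_diag_le {k : Type*} [Fintype k] [DecidableEq k]
    (A B : Matrix k k ℂ) :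
    opNorm (Matrix.fromBlocks A 0 0 B) ≤ max (opNorm A) (opNorm B) := by
  set C := max (opNorm A) (opNorm B) with hC
  have hC0 : 0 ≤ C := le_max_of_le_left (norm_nonneg _)
  apply ContinuousLinearMap.opNorm_le_bound _ hC0
  intro x
  set x₁ : EuclideanSpace ℂ k := (WithLp.equiv 2 _).symm (fun i => x (Sum.inl i)) with hx₁
  set x₂ : EuclideanSpace ℂ k := (WithLp.equiv 2 _).symm (fun i => x (Sum.inr i)) with hx₂
  have hxsum : (WithLp.equiv 2 _) x
      = Sum.elim (fun i => x (Sum.inl i)) (fun i => x (Sum.inr i)) := by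
    funext j; cases j <;> rfl
  have key : ‖(Matrix.toEuclideanCLM (𝕜 := ℂ) (Matrix.fromBlocks A 0 0 B)) x‖ ^ 2
      = ‖(Matrix.toEuclideanCLM (𝕜 := ℂ) A) x₁‖ ^ 2
        + ‖(Matrix.toEuclideanCLM (𝕜 := ℂ) B) x₂‖ ^ 2 := by
    rw [EuclideanSpace.norm_eq, EuclideanSpace.norm_eq, EuclideanSpace.norm_eq]
    rw [Real.sq_sqrt (by positivity), Real.sq_sqrt (by positivity), Real.sq_sqrt (by positivity)]
    rw [Fintype.sum_sum_type]
    congr 1 <;>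
    · apply Finset.sum_congr rfl
      intro i _
      congr 1
      show ‖(WithLp.equiv 2 _) (Matrix.toEuclideanCLM (𝕜 := ℂ) _ x) _‖ = _
      rw [WithLp.equiv_apply, Matrix.ofLp_toEuclideanCLM, ← WithLp.equiv_apply, hxsum, Matrix.fromBlocks_mulVec]
      simp [x₁, x₂, Matrix.toLin'_apply]
  have hxnorm : ‖x‖ ^ 2 = ‖x₁‖ ^ 2 + ‖x₂‖ ^ 2 := by
    rw [EuclideanSpace.norm_eq, EuclideanSpace.norm_eq, EuclideanSpace.norm_eq]
    rw [Real.sq_sqrt (by positivity), Real.sq_sqrt (by positivity), Real.sq_sqrt (by positivity)]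
    rw [Fintype.sum_sum_type]
    rfl
  have h1 : ‖(Matrix.toEuclideanCLM (𝕜 := ℂ) A) x₁‖ ≤ C * ‖x₁‖ :=
    le_trans (ContinuousLinearMap.le_opNorm _ _)
      (mul_le_mul_of_nonneg_right (le_max_left _ _) (norm_nonneg _))
  have h2 : ‖(Matrix.toEuclideanCLM (𝕜 := ℂ) B) x₂‖ ≤ C * ‖x₂‖ :=
    le_trans (ContinuousLinearMap.le_opNorm _ _)
      (mul_le_mul_of_nonneg_right (le_max_right _ _) (norm_nonneg _))
  have sq : ‖(Matrix.toEuclideanCLM (𝕜 := ℂ) (Matrix.fromBlocks A 0 0 B)) x‖ ^ 2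
      ≤ (C * ‖x‖) ^ 2 := by
    rw [key]
    have g1 := pow_le_pow_left₀ (norm_nonneg ((Matrix.toEuclideanCLM (𝕜 := ℂ) A) x₁)) h1 2
    have g2 := pow_le_pow_left₀ (norm_nonneg ((Matrix.toEuclideanCLM (𝕜 := ℂ) B) x₂)) h2 2
    calc _ ≤ (C * ‖x₁‖) ^ 2 + (C * ‖x₂‖) ^ 2 := add_le_add g1 g2
    _ = C ^ 2 * (‖x₁‖ ^ 2 + ‖x₂‖ ^ 2) := by ring
    _ = (C * ‖x‖) ^ 2 := by rw [← hxnorm]; ring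
  exact (pow_le_pow_iff_left₀ (norm_nonneg _) (mul_nonneg hC0 (norm_nonneg x)) two_ne_zero).mp sq

theorem stmt10 {n d : ℕ}
    (U : Fin d → Matrix (Fin n) (Fin n) ℂ)
    (hU : ∀ i, U i ∈ Matrix.unitaryGroup (Fin n) ℂ)
    (hUcomm : ∀ i j, U i * U j = U j * U i)
    (P : Matrix (Fin n) (Fin n) ℂ) (hPsa : Pᴴ = P) (hPproj : P * P = P)
    (ε : ℝ) (hPU : ∀ i, opNorm (P * U i - U i * P) ≤ ε) :
    ∃ V : Fin d → Matrix (Fin n ⊕ Fin n) (Fin n ⊕ Fin n) ℂ,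
      (∀ i, V i ∈ Matrix.unitaryGroup (Fin n ⊕ Fin n) ℂ) ∧
      (∀ i j, V i * V j = V j * V i) ∧
      (∀ i, V i * Matrix.fromBlocks P 0 0 (1 - P)
            = Matrix.fromBlocks P 0 0 (1 - P) * V i) ∧
      (∀ i, opNorm (V i - Matrix.fromBlocks (U i) 0 0 (U i)) ≤ 4 * ε) := by
  set Q : Matrix (Fin n ⊕ Fin n) (Fin n ⊕ Fin n) ℂ := Matrix.fromBlocks P 0 0 (1 - P) with hQdef
  set W : Matrix (Fin n ⊕ Fin n) (Fin n ⊕ Fin n) ℂ := Matrix.fromBlocks P (1 - P) (1 - P) P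
    with hWdef
  set E : Matrix (Fin n ⊕ Fin n) (Fin n ⊕ Fin n) ℂ := Matrix.fromBlocks 1 0 0 0 with hEdef
  set S : Matrix (Fin n ⊕ Fin n) (Fin n ⊕ Fin n) ℂ := Matrix.fromBlocks 0 1 1 0 with hSdef
  set D : Fin d → Matrix (Fin n ⊕ Fin n) (Fin n ⊕ Fin n) ℂ :=
    fun i => Matrix.fromBlocks (U i) 0 0 (U i) with hDdef
  have hP1 : P * (1 - P) = 0 := by rw [mul_sub, mul_one, hPproj, sub_self]
  have hP2 : (1 - P) * P = 0 := by rw [sub_mul, one_mul, hPproj, sub_self]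
  have hP3 : (1 - P) * (1 - P) = 1 - P := by rw [sub_mul, one_mul, hP1, sub_zero]
  have hW2 : W * W = 1 := by
    rw [hWdef, Matrix.fromBlocks_multiply, hP1, hP2, hP3, hPproj]
    simp only [add_zero, zero_add]
    rw [← Matrix.fromBlocks_one]
    refine Matrix.fromBlocks_inj.mpr ⟨?_, ?_, ?_, ?_⟩ <;> abel
  have hWstar : star W = W := by
    rw [hWdef, Matrix.star_eq_conjTranspose, Matrix.fromBlocks_conjTranspose]
    simp [hPsa]
  have hWunit : W ∈ Matrix.unitaryGroup (Fin n ⊕ Fin n) ℂ :=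
    Matrix.mem_unitaryGroup_iff.mpr (by rw [hWstar, hW2])
  have hSstar : star S = S := by
    rw [hSdef, Matrix.star_eq_conjTranspose, Matrix.fromBlocks_conjTranspose]
    simp
  have hS2 : S * S = 1 := by
    rw [hSdef, Matrix.fromBlocks_multiply]
    simp [← Matrix.fromBlocks_one]
  have hSunit : S ∈ Matrix.unitaryGroup (Fin n ⊕ Fin n) ℂ :=
    Matrix.mem_unitaryGroup_iff.mpr (by rw [hSstar, hS2])
  have hDunit : ∀ i, D i ∈ Matrix.unitaryGroup (Fin n ⊕ Fin n) ℂ := by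
    intro i
    rw [Matrix.mem_unitaryGroup_iff]
    rw [hDdef]
    simp only [Matrix.star_eq_conjTranspose, Matrix.fromBlocks_conjTranspose,
      Matrix.conjTranspose_zero, Matrix.fromBlocks_multiply, mul_zero, zero_mul, add_zero,
      zero_add]
    rw [← Matrix.star_eq_conjTranspose, Matrix.mem_unitaryGroup_iff.mp (hU i),
      ← Matrix.fromBlocks_one]
  have hVdef : ∀ i, W * D i * W ∈ Matrix.unitaryGroup (Fin n ⊕ Fin n) ℂ := fun i =>
    mul_mem (mul_mem hWunit (hDunit i)) hWunit
  have hWQ : W * Q = E * W := by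
    rw [hWdef, hQdef, hEdef, Matrix.fromBlocks_multiply, Matrix.fromBlocks_multiply]
    simp [hPproj, hP1, hP2, hP3]
  have hQW : Q * W = W * E := by
    rw [hWdef, hQdef, hEdef, Matrix.fromBlocks_multiply, Matrix.fromBlocks_multiply]
    simp [hPproj, hP1, hP2, hP3]
  have hDE : ∀ i, D i * E = E * D i := by
    intro i
    rw [hDdef, hEdef, Matrix.fromBlocks_multiply, Matrix.fromBlocks_multiply]
    simp
  refine ⟨fun i => W * D i * W, hVdef, ?_, ?_, ?_⟩
  · intro i j
    have : ∀ a b : Matrix (Fin n ⊕ Fin n) (Fin n ⊕ Fin n) ℂ,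
        (W * a * W) * (W * b * W) = W * (a * b) * W := by
      intro a b
      calc (W * a * W) * (W * b * W) = W * a * (W * W) * b * W := by
            simp only [mul_assoc]
      _ = W * (a * b) * W := by rw [hW2]; simp only [mul_assoc, one_mul]
    rw [this, this]
    congr 1
    congr 1
    rw [hDdef, Matrix.fromBlocks_multiply, Matrix.fromBlocks_multiply]
    simp [hUcomm i j]
  · intro i
    calc (W * D i * W) * Q = W * D i * (W * Q) := by simp only [mul_assoc]
    _ = W * D i * (E * W) := by rw [hWQ]
    _ = W * (D i * E) * W := by simp only [mul_assoc]
    _ = W * (E * D i) * W := by rw [hDE]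
    _ = (W * E) * (D i * W) := by simp only [mul_assoc]
    _ = (Q * W) * (D i * W) := by rw [hQW]
    _ = Q * (W * D i * W) := by simp only [mul_assoc]
  · intro i
    have hε0 : 0 ≤ ε := le_trans (opNorm_nonneg _) (hPU i)
    set K : Matrix (Fin n) (Fin n) ℂ := U i * P - P * U i with hKdef
    set T : Matrix (Fin n ⊕ Fin n) (Fin n ⊕ Fin n) ℂ := Matrix.fromBlocks 1 (-1) (-1) 1
      with hTdef
    have hident : W * D i * W - D i = W * Matrix.fromBlocks K 0 0 K * T := by
      rw [hWdef, hDdef, hTdef, hKdef]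
      simp only [Matrix.fromBlocks_multiply]
      rw [fromBlocks_sub']
      have hPPu : P * (P * U i) = P * U i := by rw [← mul_assoc, hPproj]
      refine Matrix.fromBlocks_inj.mpr ⟨?_, ?_, ?_, ?_⟩ <;>
        · simp only [mul_sub, sub_mul, mul_one, one_mul, mul_neg, neg_mul, mul_zero, zero_mul,
            add_zero, zero_add, mul_assoc, hPPu]
          abel
    have hT1S : T = 1 - S := by
      rw [hTdef, hSdef, ← Matrix.fromBlocks_one, fromBlocks_sub']
      refine Matrix.fromBlocks_inj.mpr ⟨?_, ?_, ?_, ?_⟩ <;> abel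
    have hTle : opNorm T ≤ 2 := by
      rw [hT1S]
      calc opNorm (1 - S) ≤ opNorm 1 + opNorm S := opNorm_sub_le _ _
      _ ≤ 1 + 1 := add_le_add (opNorm_unitary_le (one_mem _)) (opNorm_unitary_le hSunit)
      _ = 2 := by norm_num
    have hKle : opNorm K ≤ ε := by
      rw [hKdef, ← opNorm_neg, neg_sub]
      exact hPU i
    have hdK : opNorm (Matrix.fromBlocks K 0 0 K) ≤ ε :=
      le_trans (opNorm_fromBlocks_diag_le K K) (by simp [hKle])
    have hWle : opNorm W ≤ 1 := opNorm_unitary_le hWunit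
    rw [hident]
    nlinarith [opNorm_mul_le W (Matrix.fromBlocks K 0 0 K),
      opNorm_mul_le (W * Matrix.fromBlocks K 0 0 K) T,
      opNorm_nonneg (W * Matrix.fromBlocks K 0 0 K), opNorm_nonneg T,
      opNorm_nonneg W, opNorm_nonneg (Matrix.fromBlocks K 0 0 K), hdK, hWle, hTle, hε0]
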